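/- For any N nonnegative vectors u_1, ..., u_N in ℝ^d, there exists a subset I ⊆ {1,...,N} with |I| ≤ (d-1) + ⌈(N - d + 1)/2⌉ such that ∑_{i ∈ I} u_i ⪰ (1/2) ∑_{i=1}^N u_i coordinatewise. -/

import Mathlib

lemma exists_dep {N d : ℕ} (u : Fin N → Fin d → ℝ) (F : Finset (Fin N)) (hF : d < F.card) :
    ∃ lam : Fin N → ℝ, (∃ i ∈ F, lam i ≠ 0) ∧ (∀ i, i ∉ F → lam i = 0) ∧
      ∀ j, ∑ i, lam i * u i j = 0 := by
  have hnli : ¬ LinearIndependent ℝ (fun i : F => u i) := by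
    intro h
    have h2 := h.fintype_card_le_finrank
    rw [Module.finrank_fintype_fun_eq_card, Fintype.card_coe, Fintype.card_fin] at h2
    omega
  rw [Fintype.not_linearIndependent_iff] at hnli
  obtain ⟨g, hg0, i1, hi1⟩ := hnli
  refine ⟨fun i => if h : i ∈ F then g ⟨i, h⟩ else 0, ⟨i1, i1.2, by simpa [i1.2] using hi1⟩,
    fun i hi => by simp [hi], fun j => ?_⟩
  have h2 := congrFun hg0 j
  rw [Finset.sum_apply] at h2
  calc ∑ i, (if h : i ∈ F then g ⟨i, h⟩ else 0) * u i j
      = ∑ i ∈ F, (if h : i ∈ F then g ⟨i, h⟩ else 0) * u i j :=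
        (Finset.sum_subset (Finset.subset_univ F) (fun i _ hi => by simp [hi])).symm
    _ = ∑ i ∈ F.attach, (if h : i.1 ∈ F then g ⟨i.1, h⟩ else 0) * u i.1 j :=
        (Finset.sum_attach F _).symm
    _ = ∑ i : F, g i * u i.1 j := by
        refine Finset.sum_congr rfl fun i _ => ?_; rw [dif_pos i.2]
    _ = 0 := by simpa using h2


lemma round_step {N d : ℕ} (u : Fin N → Fin d → ℝ) :
    ∀ n (x : Fin N → ℝ), (Finset.univ.filter (fun i => x i ≠ 0 ∧ x i ≠ 1)).card ≤ n →
    (∀ i, 0 ≤ x i) → (∀ i, x i ≤ 1) →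
    ∃ y : Fin N → ℝ, (∀ i, 0 ≤ y i) ∧ (∀ i, y i ≤ 1) ∧
      (∀ j, ∑ i, y i * u i j = ∑ i, x i * u i j) ∧
      (Finset.univ.filter (fun i => y i ≠ 0 ∧ y i ≠ 1)).card ≤ d := by
  intro n
  induction n with
  | zero => exact fun x hc h0 h1 => ⟨x, h0, h1, fun j => rfl, by omega⟩
  | succ n ih =>
    intro x hc h0 h1
    set F := Finset.univ.filter (fun i => x i ≠ 0 ∧ x i ≠ 1) with hFdef
    by_cases hd : F.card ≤ d
    · exact ⟨x, h0, h1, fun _ => rfl, hd⟩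
    · push_neg at hd
      obtain ⟨lam, ⟨i1, hi1F, hi1⟩, hsupp, hker⟩ := exists_dep u F hd
      set S := F.filter (fun i => lam i ≠ 0) with hSdef
      have hS : S.Nonempty := ⟨i1, by simp [hSdef, hi1F, hi1]⟩
      have hlam0 : ∀ i, i ∉ S → lam i = 0 := by
        intro i hi
        by_cases hiF : i ∈ F
        · by_contra h; exact hi (by simp [hSdef, hiF, h])
        · exact hsupp i hiF
      have hSfrac : ∀ i ∈ S, 0 < x i ∧ x i < 1 := by
        intro i hi
        have hiF : i ∈ F := Finset.mem_of_mem_filter i hi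
        rw [hFdef, Finset.mem_filter] at hiF
        exact ⟨lt_of_le_of_ne (h0 i) (Ne.symm hiF.2.1), lt_of_le_of_ne (h1 i) hiF.2.2⟩
      set b : Fin N → ℝ := fun i => if 0 < lam i then (1 - x i) / lam i else x i / (-lam i)
        with hbdef
      obtain ⟨i0, hi0S, hmin⟩ := S.exists_min_image b hS
      set t := b i0 with htdef
      have hbpos : ∀ i ∈ S, 0 < b i := by
        intro i hi
        obtain ⟨hx0, hx1⟩ := hSfrac i hi
        have hlne : lam i ≠ 0 := (Finset.mem_filter.1 hi).2
        simp only [hbdef]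
        by_cases hp : 0 < lam i
        · rw [if_pos hp]; exact div_pos (by linarith) hp
        · rw [if_neg hp]
          exact div_pos hx0 (by rcases lt_or_gt_of_ne hlne with h | h <;> [linarith; exact absurd h hp])
      have ht : 0 < t := hbpos i0 hi0S
      set y : Fin N → ℝ := fun i => x i + t * lam i with hydef
      -- bounds on y for i in S
      have hySbound : ∀ i ∈ S, 0 ≤ y i ∧ y i ≤ 1 := by
        intro i hi
        obtain ⟨hx0, hx1⟩ := hSfrac i hi
        have hlne : lam i ≠ 0 := (Finset.mem_filter.1 hi).2
        have hti : t ≤ b i := hmin i hi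
        simp only [hydef]
        by_cases hp : 0 < lam i
        · have : t * lam i ≤ 1 - x i := by
            simp only [hbdef, if_pos hp] at hti
            calc t * lam i ≤ ((1 - x i) / lam i) * lam i := by nlinarith
              _ = 1 - x i := by field_simp
          constructor
          · nlinarith
          · linarith
        · have hneg : lam i < 0 := by
            rcases lt_or_gt_of_ne hlne with h | h
            · exact h
            · exact absurd h hp
          have : x i + t * lam i ≥ 0 := by
            simp only [hbdef, if_neg hp] at hti
            have h2 : t * (-lam i) ≤ x i := by
              calc t * (-lam i) ≤ (x i / (-lam i)) * (-lam i) := by nlinarith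
                _ = x i := by field_simp
            nlinarith
          constructor
          · linarith
          · nlinarith
      have hyoff : ∀ i, i ∉ S → y i = x i := by
        intro i hi; rw [hydef]; simp [hlam0 i hi]
      have hy0 : ∀ i, 0 ≤ y i := by
        intro i
        by_cases hi : i ∈ S
        · exact (hySbound i hi).1
        · rw [hyoff i hi]; exact h0 i
      have hy1 : ∀ i, y i ≤ 1 := by
        intro i
        by_cases hi : i ∈ S
        · exact (hySbound i hi).2
        · rw [hyoff i hi]; exact h1 i
      have hyi0 : y i0 = 0 ∨ y i0 = 1 := by
        have hlne : lam i0 ≠ 0 := (Finset.mem_filter.1 hi0S).2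
        have hlne' : -lam i0 ≠ 0 := neg_ne_zero.2 hlne
        simp only [hydef, htdef, hbdef]
        by_cases hp : 0 < lam i0
        · right; simp only [if_pos hp]; field_simp; ring
        · left; simp only [if_neg hp]; field_simp; ring
      -- fractional set shrinks
      have hsub : (Finset.univ.filter (fun i => y i ≠ 0 ∧ y i ≠ 1)) ⊆ F.erase i0 := by
        intro i hi
        rw [Finset.mem_filter] at hi
        refine Finset.mem_erase.2 ⟨?_, ?_⟩
        · rintro rfl; rcases hyi0 with h | h
          · exact hi.2.1 h
          · exact hi.2.2 h
        · by_cases hiS : i ∈ S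
          · exact Finset.mem_of_mem_filter i hiS
          · rw [hFdef, Finset.mem_filter]
            exact ⟨Finset.mem_univ i, by rw [← hyoff i hiS]; exact hi.2⟩
      have hcard : (Finset.univ.filter (fun i => y i ≠ 0 ∧ y i ≠ 1)).card ≤ n := by
        have h1c := Finset.card_le_card hsub
        have h2c := Finset.card_erase_of_mem (Finset.mem_of_mem_filter i0 hi0S)
        omega
      obtain ⟨z, hz0, hz1, hzeq, hzd⟩ := ih y hcard hy0 hy1
      refine ⟨z, hz0, hz1, fun j => ?_, hzd⟩
      rw [hzeq j]
      have : ∑ i, y i * u i j = ∑ i, x i * u i j + t * ∑ i, lam i * u i j := by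
        rw [Finset.mul_sum, ← Finset.sum_add_distrib]
        exact Finset.sum_congr rfl fun i _ => by rw [hydef]; ring
      rw [this, hker j, mul_zero, add_zero]

theorem stmt_9 (N d : ℕ) (u : Fin N → Fin d → ℝ) (hu : ∀ i j, 0 ≤ u i j) :
    ∃ I : Finset (Fin N),
      (I.card : ℤ) ≤ (d - 1 : ℤ) + ⌈(((N : ℚ) - d + 1) / 2)⌉ ∧
      ∀ j, (1 / 2 : ℝ) * ∑ i, u i j ≤ ∑ i ∈ I, u i j := by
  obtain ⟨y, hy0, hy1, hyeq, hyd⟩ :=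
    round_step u N (fun _ => (1/2 : ℝ))
      (by
        have := Finset.card_filter_le Finset.univ
          (fun i : Fin N => (1/2 : ℝ) ≠ 0 ∧ (1/2 : ℝ) ≠ 1)
        simpa using this)
      (fun _ => by norm_num) (fun _ => by norm_num)
  have hyhalf : ∀ j, ∑ i, y i * u i j = (1/2 : ℝ) * ∑ i, u i j := by
    intro j
    rw [hyeq j, Finset.mul_sum]
  set I0 := Finset.univ.filter (fun i => y i ≠ 0) with hI0
  set I1 := Finset.univ.filter (fun i => y i ≠ 1) with hI1
  have hunion : I0 ∪ I1 = Finset.univ := by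
    ext i
    simp only [hI0, hI1, Finset.mem_union, Finset.mem_filter, Finset.mem_univ, true_and,
      iff_true]
    by_contra h
    push_neg at h
    obtain ⟨h0', h1'⟩ := h
    rw [h0'] at h1'
    norm_num at h1'
  have hinter : I0 ∩ I1 = Finset.univ.filter (fun i => y i ≠ 0 ∧ y i ≠ 1) := by
    ext i
    simp [hI0, hI1, Finset.mem_inter, Finset.mem_filter, and_assoc]
  have hcards : I0.card + I1.card ≤ N + d := by
    have := Finset.card_union_add_card_inter I0 I1
    rw [hunion, hinter] at this
    simp only [Finset.card_univ, Fintype.card_fin] at this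
    omega
  -- sum bounds
  have hsum0 : ∀ j, (1 / 2 : ℝ) * ∑ i, u i j ≤ ∑ i ∈ I0, u i j := by
    intro j
    calc (1/2 : ℝ) * ∑ i, u i j = ∑ i, y i * u i j := (hyhalf j).symm
      _ = ∑ i ∈ I0, y i * u i j := by
          refine (Finset.sum_subset (Finset.subset_univ I0) fun i _ hi => ?_).symm
          have : y i = 0 := by simpa [hI0] using hi
          rw [this, zero_mul]
      _ ≤ ∑ i ∈ I0, u i j := by
          refine Finset.sum_le_sum fun i _ => ?_
          calc y i * u i j ≤ 1 * u i j := mul_le_mul_of_nonneg_right (hy1 i) (hu i j)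
            _ = u i j := one_mul _
  have hsum1 : ∀ j, (1 / 2 : ℝ) * ∑ i, u i j ≤ ∑ i ∈ I1, u i j := by
    intro j
    calc (1/2 : ℝ) * ∑ i, u i j = ∑ i, u i j - (1/2 : ℝ) * ∑ i, u i j := by ring
      _ = ∑ i, (1 - y i) * u i j := by
          rw [← hyhalf j, ← Finset.sum_sub_distrib]
          exact Finset.sum_congr rfl fun i _ => by ring
      _ = ∑ i ∈ I1, (1 - y i) * u i j := by
          refine (Finset.sum_subset (Finset.subset_univ I1) fun i _ hi => ?_).symm
          have : y i = 1 := by simpa [hI1] using hi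
          rw [this]; ring
      _ ≤ ∑ i ∈ I1, u i j := by
          refine Finset.sum_le_sum fun i _ => ?_
          calc (1 - y i) * u i j ≤ 1 * u i j := by
                apply mul_le_mul_of_nonneg_right _ (hu i j); linarith [hy0 i]
            _ = u i j := one_mul _
  -- pick the smaller one
  have harith : ∀ k : ℕ, 2 * k ≤ N + d →
      (k : ℤ) ≤ (d - 1 : ℤ) + ⌈(((N : ℚ) - d + 1) / 2)⌉ := by
    intro k hk
    have : ((k : ℤ) - d) < ⌈(((N : ℚ) - d + 1) / 2)⌉ := by
      rw [Int.lt_ceil]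
      rw [lt_div_iff₀ (by norm_num : (0:ℚ) < 2)]
      push_cast
      have : (2 : ℚ) * k ≤ N + d := by exact_mod_cast hk
      linarith
    omega
  rcases le_total I0.card I1.card with h | h
  · exact ⟨I0, harith I0.card (by omega), hsum0⟩
  · exact ⟨I1, harith I1.card (by omega), hsum1⟩
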